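/- Let F be a free group and let W be a finite set of non-trivial elements of F. Then the intersection over all w ∈ W of the normal closures ⟨⟨w⟩⟩ of the single elements w in F is a non-trivial subgroup; that is, there exists a non-trivial element u ∈ F such that u lies in the normal closure of {w} for every w ∈ W. (Consequently, for every group G and every homomorphism φ : F → G, if φ(w)=1 for some w ∈ W then φ(u)=1.) -/

import Mathlib

open Subgroup

private lemma of_mul_of_ne {β : Type*} {x y : β} (h : x ≠ y) :
    FreeGroup.of x * FreeGroup.of y ≠ FreeGroup.of y * FreeGroup.of x := by
  classical
  intro hc
  have h2 := congrArg (FreeGroup.lift (fun z =>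
    if z = x then (Equiv.swap 0 1 : Equiv.Perm (Fin 3)) else
    if z = y then Equiv.swap 1 2 else 1)) hc
  simp only [map_mul, FreeGroup.lift_apply_of, if_pos rfl, if_neg h, if_neg (Ne.symm h)] at h2
  exact absurd h2 (by decide)

private lemma freeGroup_eq_one_of_isEmpty {β : Type*} [IsEmpty β] (x : FreeGroup β) : x = 1 := by
  rw [← FreeGroup.toWord_eq_nil_iff]
  cases hx : x.toWord with
  | nil => rfl
  | cons hd tl => exact isEmptyElim hd.1

private lemma exists_zpowers_of_comm (G : Type*) [Group G] [IsFreeGroup G]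
    (hcomm : ∀ x y : G, x * y = y * x) : ∃ g : G, ∀ x : G, x ∈ Subgroup.zpowers g := by
  classical
  let e : G ≃* FreeGroup (IsFreeGroup.Generators G) := IsFreeGroup.toFreeGroup (G := G)
  have hcomm' : ∀ u v : FreeGroup (IsFreeGroup.Generators G), u * v = v * u := by
    intro u v
    have h := congrArg e (hcomm (e.symm u) (e.symm v))
    simpa using h
  have hsub : ∀ x y : IsFreeGroup.Generators G, x = y := by
    intro x y; by_contra h
    exact of_mul_of_ne h (hcomm' _ _)
  rcases isEmpty_or_nonempty (IsFreeGroup.Generators G) with hβe | ⟨⟨b⟩⟩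
  · refine ⟨1, fun x => ?_⟩
    have h1 : e x = 1 := freeGroup_eq_one_of_isEmpty _
    have h2 : x = 1 := by
      apply e.injective; simpa using h1
    simp [h2]
  · refine ⟨e.symm (FreeGroup.of b), fun x => ?_⟩
    have key : ∀ u : FreeGroup (IsFreeGroup.Generators G),
        u ∈ Subgroup.zpowers (FreeGroup.of b) := by
      intro u
      induction u using FreeGroup.induction_on with
      | C1 => exact one_mem _
      | of z => have hz : z = b := hsub z b; subst hz; exact Subgroup.mem_zpowers _
      | inv_of z ih => exact inv_mem ih
      | mul z w hz hw => exact mul_mem hz hw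
    rcases key (e x) with ⟨n, hn⟩
    refine ⟨n, ?_⟩
    apply e.injective
    simpa using hn

private lemma freeGroup_not_isOfFinOrder {α : Type*} {a : FreeGroup α} (ha : a ≠ 1) :
    ¬ IsOfFinOrder a := by
  classical
  intro hfin
  haveI : Finite (Subgroup.zpowers a) := hfin.finite_zpowers.to_subtype
  let e := IsFreeGroup.toFreeGroup (G := Subgroup.zpowers a)
  haveI : Finite (FreeGroup (IsFreeGroup.Generators (Subgroup.zpowers a))) :=
    Finite.of_equiv _ e.toEquiv
  have hβ : IsEmpty (IsFreeGroup.Generators (Subgroup.zpowers a)) := by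
    by_contra h
    rw [not_isEmpty_iff] at h
    obtain ⟨b⟩ := h
    have hinj : Function.Injective (fun n : ℕ => FreeGroup.of b ^ n) := by
      intro m n hmn
      have h2 := congrArg FreeGroup.norm hmn
      simpa [FreeGroup.norm_of_pow] using h2
    haveI := Finite.of_injective _ hinj
    exact not_finite ℕ
  have hone : (⟨a, Subgroup.mem_zpowers a⟩ : Subgroup.zpowers a) = ⟨1, one_mem _⟩ := by
    apply e.injective
    rw [freeGroup_eq_one_of_isEmpty (e ⟨a, Subgroup.mem_zpowers a⟩),
      freeGroup_eq_one_of_isEmpty (e ⟨1, one_mem _⟩)]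
  exact ha (by simpa using congrArg Subtype.val hone)

private lemma freeGroup_zpow_ne_one {α : Type*} {a : FreeGroup α} (ha : a ≠ 1) {n : ℤ}
    (hn : n ≠ 0) : a ^ n ≠ 1 := by
  have hinj := injective_zpow_iff_not_isOfFinOrder.2 (freeGroup_not_isOfFinOrder ha)
  intro h
  exact hn (hinj (show a ^ n = a ^ (0 : ℤ) by simpa using h))

private lemma exists_common_power {α : Type*} {u a : FreeGroup α} (hu : u ≠ 1) (ha : a ≠ 1)
    (hc : u * a = a * u) : ∃ p q : ℤ, p ≠ 0 ∧ q ≠ 0 ∧ u ^ q = a ^ p := by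
  set H := Subgroup.closure ({u, a} : Set (FreeGroup α)) with hH
  have hu' : u ∈ H := Subgroup.subset_closure (by simp)
  have ha' : a ∈ H := Subgroup.subset_closure (by simp)
  have hpair : ∀ x ∈ H, ∀ y ∈ H, x * y = y * x := by
    intro x hx y hy
    induction hx, hy using Subgroup.closure_induction₂ with
    | mem x y hx hy =>
      rcases hx with rfl | rfl <;> rcases hy with rfl | rfl
      · rfl
      · exact hc
      · exact hc.symm
      · rfl
    | one_left x hx => simp
    | one_right x hx => simp
    | mul_left x y z hx hy hz h1 h2 =>
      exact (Commute.mul_left (h1 : Commute x z) (h2 : Commute y z))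
    | mul_right y z x hy hz hx h1 h2 =>
      exact (Commute.mul_right (h1 : Commute x y) (h2 : Commute x z))
    | inv_left x y hx hy h1 => exact (Commute.inv_left (h1 : Commute x y))
    | inv_right x y hx hy h1 => exact (Commute.inv_right (h1 : Commute x y))
  have hcommH : ∀ x y : H, x * y = y * x := by
    rintro ⟨x, hx⟩ ⟨y, hy⟩
    exact Subtype.ext (hpair x hx y hy)
  obtain ⟨g, hg⟩ := exists_zpowers_of_comm H hcommH
  obtain ⟨p, hp⟩ := hg ⟨u, hu'⟩
  obtain ⟨q, hq⟩ := hg ⟨a, ha'⟩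
  have hpu : (g : FreeGroup α) ^ p = u := by
    have := congrArg Subtype.val hp
    simpa using this
  have hqa : (g : FreeGroup α) ^ q = a := by
    have := congrArg Subtype.val hq
    simpa using this
  refine ⟨p, q, ?_, ?_, ?_⟩
  · intro h; subst h; simp at hpu; exact hu hpu.symm
  · intro h; subst h; simp at hqa; exact ha hqa.symm
  · rw [← hpu, ← hqa, ← zpow_mul, ← zpow_mul, mul_comm]

private lemma main_aux {α : Type} [Nonempty α] (W : Finset (FreeGroup α)) :
    (∀ w ∈ W, w ≠ 1) →
      ∃ u : FreeGroup α, u ≠ 1 ∧ ∀ w ∈ W, u ∈ Subgroup.normalClosure {w} := by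
  classical
  induction W using Finset.induction_on with
  | empty =>
    intro _
    exact ⟨FreeGroup.of (Classical.arbitrary α), FreeGroup.of_ne_one _, by simp⟩
  | @insert a W ha ih =>
    intro hW
    obtain ⟨u, hu1, hu2⟩ := ih (fun w hw => hW w (Finset.mem_insert_of_mem hw))
    have hane : a ≠ 1 := hW a (Finset.mem_insert_self a W)
    by_cases hc : u * a = a * u
    · obtain ⟨p, q, hp, hq, heq⟩ := exists_common_power hu1 hane hc
      refine ⟨u ^ q, freeGroup_zpow_ne_one hu1 hq, ?_⟩
      intro w hw
      rcases Finset.mem_insert.1 hw with rfl | hw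
      · rw [heq]
        exact zpow_mem (Subgroup.subset_normalClosure (by simp)) p
      · exact zpow_mem (hu2 w hw) q
    · refine ⟨u * a * u⁻¹ * a⁻¹, ?_, ?_⟩
      · intro h
        apply hc
        have h' := mul_inv_eq_one.mp h
        rw [mul_inv_eq_iff_eq_mul] at h'
        exact h'
      · intro w hw
        rcases Finset.mem_insert.1 hw with rfl | hw
        · have h1 : w ∈ Subgroup.normalClosure {w} :=
            Subgroup.subset_normalClosure rfl
          have h2 : u * w * u⁻¹ ∈ Subgroup.normalClosure {w} :=
            (Subgroup.normalClosure_normal).conj_mem _ h1 u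
          exact mul_mem h2 (inv_mem h1)
        · have h1 := hu2 w hw
          have h2 : a * u⁻¹ * a⁻¹ ∈ Subgroup.normalClosure {w} :=
            (Subgroup.normalClosure_normal).conj_mem _ (inv_mem h1) a
          have h3 := mul_mem h1 h2
          simpa [mul_assoc] using h3

/-- Let `F` be a free group (on a nonempty set of generators) and let `W` be a finite set of
non-trivial elements of `F`. Then there exists a non-trivial element `u ∈ F` lying in the
normal closure `⟨⟨w⟩⟩` of each single element `w ∈ W`; consequently, for every group `G` and
homomorphism `φ : F → G`, if `φ(w) = 1` for some `w ∈ W` then `φ(u) = 1`. -/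
theorem exists_nontrivial_in_all_normalClosures (α : Type) [Nonempty α]
    (W : Finset (FreeGroup α)) (hW : ∀ w ∈ W, w ≠ 1) :
    ∃ u : FreeGroup α, u ≠ 1 ∧ (∀ w ∈ W, u ∈ Subgroup.normalClosure {w}) ∧
      ∀ (G : Type) [Group G] (φ : FreeGroup α →* G), (∃ w ∈ W, φ w = 1) → φ u = 1 := by
  obtain ⟨u, hu1, hu2⟩ := main_aux W hW
  refine ⟨u, hu1, hu2, ?_⟩
  rintro G _ φ ⟨w, hw, hφ⟩
  have hle : Subgroup.normalClosure {w} ≤ φ.ker :=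
    Subgroup.normalClosure_le_normal (by simpa [Set.singleton_subset_iff] using hφ)
  exact hle (hu2 w hw)
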